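/- Let Z_1, ..., Z_n be independent random variables, each uniformly distributed on a set M of m elements, and let T = |{j ∈ M : |{i : Z_i = j}| > 1}|. Then E[T] ≥ m·(1 − (1 + (n−1)/m)·e^{−(n−1)/m}). -/

import Mathlib

open MeasureTheory ProbabilityTheory

/-- The number of elements of `Fin m` taken as value by more than one of the coordinates
of `z`. -/
def repeatCount {n m : ℕ} (z : Fin n → Fin m) : ℕ :=
  (Finset.univ.filter (fun j : Fin m =>
    1 < (Finset.univ.filter (fun i : Fin n => z i = j)).card)).card

lemma key_real_ineq (n m : ℕ) (hn : 2 ≤ n) (hm : 2 ≤ m) :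
    (1 - (m:ℝ)⁻¹) ^ n + n * (m:ℝ)⁻¹ * (1 - (m:ℝ)⁻¹) ^ (n-1) ≤
      (1 + ((n : ℝ) - 1) / m) * Real.exp (-((n : ℝ) - 1) / m) := by
  set x : ℝ := (m:ℝ)⁻¹ with hx
  have hm0 : (0:ℝ) < m := by positivity
  have hx0 : 0 < x := by positivity
  have hx1 : x ≤ 1 := by
    rw [hx, inv_le_one_iff₀]
    right; exact_mod_cast Nat.one_le_of_lt hm
  obtain ⟨a, rfl⟩ : ∃ a, n = a + 1 := ⟨n - 1, by omega⟩
  have hna : ((a+1:ℕ) : ℝ) - 1 = (a:ℝ) := by push_cast; ring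
  have h1 : (1 - x) ^ a ≤ Real.exp (-(a * x)) := by
    have hb : 1 - x ≤ Real.exp (-x) := by
      have := Real.add_one_le_exp (-x); linarith
    calc (1 - x) ^ a ≤ Real.exp (-x) ^ a := pow_le_pow_left₀ (by linarith) hb a
      _ = Real.exp (a * (-x)) := (Real.exp_nat_mul _ a).symm
      _ = Real.exp (-(a * x)) := by ring_nf
  have hsimp : (a+1) - 1 = a := by omega
  rw [hsimp]
  have hcoef : (0:ℝ) ≤ 1 + a * x := by positivity
  calc (1 - x) ^ (a+1) + ((a+1:ℕ):ℝ) * x * (1 - x) ^ a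
      = (1 + a * x) * (1 - x) ^ a := by push_cast; ring
    _ ≤ (1 + a * x) * Real.exp (-(a * x)) := mul_le_mul_of_nonneg_left h1 hcoef
    _ = (1 + (((a+1:ℕ):ℝ) - 1) / m) * Real.exp (-(((a+1:ℕ):ℝ) - 1) / m) := by
        rw [hna, show (a:ℝ) * x = (a:ℝ)/m by rw [hx]; field_simp]
        ring_nf

/-- If `Z 1, ..., Z n` are independent and each uniformly distributed on a set of `m`
elements, then the expected number of elements chosen by more than one of them is
at least `m (1 - (1 + (n-1)/m) e^{-(n-1)/m})`. -/
theorem expected_repeatCount_ge (n m : ℕ) (hn : 2 ≤ n) (hm : 2 ≤ m)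
    {Ω : Type*} [MeasurableSpace Ω] (P : Measure Ω) [IsProbabilityMeasure P]
    (Z : Fin n → Ω → Fin m) (hmeas : ∀ i, Measurable (Z i))
    (hindep : iIndepFun Z P)
    (hunif : ∀ (i : Fin n) (j : Fin m), P {ω | Z i ω = j} = ((m : ENNReal))⁻¹) :
    m * (1 - (1 + ((n : ℝ) - 1) / m) * Real.exp (-((n : ℝ) - 1) / m)) ≤
      ∫ ω, (repeatCount (fun i => Z i ω) : ℝ) ∂P := by
  have : NeZero n := ⟨by omega⟩
  have : NeZero m := ⟨by omega⟩
  set p : ENNReal := (m : ENNReal)⁻¹ with hp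
  set q : ENNReal := 1 - p with hq
  have hp1 : p ≤ 1 := by
    rw [hp]
    refine ENNReal.inv_le_one.mpr ?_
    exact_mod_cast Nat.one_le_of_lt hm
  have hpt : p ≠ ⊤ := by simp [hp]; omega
  have hqt : q ≠ ⊤ := by
    rw [hq]; exact (tsub_le_self.trans_lt ENNReal.one_lt_top).ne
  have hZj : ∀ (i : Fin n) (j : Fin m), P ((Z i) ⁻¹' {j}) = p := by
    intro i j
    simpa [Set.preimage, Set.mem_singleton_iff] using hunif i j
  have hZjc : ∀ (i : Fin n) (j : Fin m), P (((Z i) ⁻¹' {j})ᶜ) = q := by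
    intro i j
    rw [prob_compl_eq_one_sub ((hmeas i) (measurableSet_singleton j)), hZj]
  set A : Fin m → Set Ω := fun j =>
    {ω | 1 < (Finset.univ.filter (fun i : Fin n => Z i ω = j)).card} with hA
  have hcardmeas : ∀ j : Fin m,
      Measurable (fun ω => (Finset.univ.filter (fun i : Fin n => Z i ω = j)).card) := by
    intro j
    simp_rw [Finset.card_filter]
    refine Finset.measurable_sum _ (fun i _ => ?_)
    exact Measurable.ite ((hmeas i) (measurableSet_singleton j)) measurable_const
      measurable_const
  have hAmeas : ∀ j, MeasurableSet (A j) := fun j => (hcardmeas j) measurableSet_Ioi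
  have hrc : ∀ ω, (repeatCount (fun i => Z i ω) : ℝ)
      = ∑ j : Fin m, (A j).indicator (fun _ => (1:ℝ)) ω := by
    intro ω
    rw [repeatCount, Finset.card_filter]
    push_cast
    refine Finset.sum_congr rfl (fun j _ => ?_)
    by_cases h : 1 < (Finset.univ.filter (fun i : Fin n => Z i ω = j)).card
    · have hm' : ω ∈ A j := h
      simp [Set.indicator_of_mem hm', h]
    · have hm' : ω ∉ A j := h
      simp [Set.indicator_of_notMem hm', h]
  have hint : ∫ ω, (repeatCount (fun i => Z i ω) : ℝ) ∂P
      = ∑ j : Fin m, (P (A j)).toReal := by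
    simp_rw [hrc]
    rw [integral_finset_sum _ (fun j _ => (integrable_const (1:ℝ)).indicator (hAmeas j))]
    refine Finset.sum_congr rfl (fun j _ => ?_)
    rw [integral_indicator_const _ (hAmeas j)]; simp [measureReal_def]
  rw [hint]
  have hjbound : ∀ j : Fin m,
      1 - (1 + ((n : ℝ) - 1) / m) * Real.exp (-((n : ℝ) - 1) / m) ≤ (P (A j)).toReal := by
    intro j
    set E0 : Set Ω := ⋂ i, (Z i) ⁻¹' {j}ᶜ with hE0
    set E : Fin n → Set Ω := fun i0 => ⋂ i, (Z i) ⁻¹' (if i = i0 then {j} else {j}ᶜ) with hE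
    have hPE0 : P E0 = q ^ n := by
      rw [hE0, hindep.meas_iInter (fun i => ⟨{j}ᶜ, trivial, rfl⟩)]
      simp [Set.preimage_compl, hZjc]
    have hPE : ∀ i0, P (E i0) = p * q ^ (n - 1) := by
      intro i0
      rw [hE, hindep.meas_iInter (fun i => ⟨if i = i0 then {j} else {j}ᶜ, trivial, rfl⟩)]
      have hfac : ∀ i : Fin n, P ((Z i) ⁻¹' (if i = i0 then {j} else {j}ᶜ))
          = if i = i0 then p else q := by
        intro i
        by_cases h : i = i0
        · simp [h, hZj]
        · simp only [if_neg h, Set.preimage_compl]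
          exact hZjc i j
      simp_rw [hfac]
      rw [← Finset.prod_filter_mul_prod_filter_not Finset.univ (fun x => x = i0)]
      have h1 : Finset.univ.filter (fun x : Fin n => x = i0) = {i0} := by
        simp [Finset.filter_eq']
      have h2 : Finset.univ.filter (fun x : Fin n => ¬ x = i0) = Finset.univ.erase i0 := by
        ext x; simp [Finset.mem_erase, and_comm]
      rw [h1, h2, Finset.prod_singleton, if_pos rfl]
      rw [Finset.prod_congr rfl (fun x hx => if_neg (Finset.ne_of_mem_erase hx))]
      rw [Finset.prod_const, Finset.card_erase_of_mem (Finset.mem_univ i0),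
        Finset.card_univ, Fintype.card_fin]
    have hsub : (A j)ᶜ ⊆ E0 ∪ ⋃ i0, E i0 := by
      intro ω hω
      have hcard : (Finset.univ.filter (fun i : Fin n => Z i ω = j)).card ≤ 1 :=
        not_lt.mp hω
      by_cases hex : ∃ i0, Z i0 ω = j
      · obtain ⟨i0, hi0⟩ := hex
        right
        refine Set.mem_iUnion.mpr ⟨i0, Set.mem_iInter.mpr (fun i => ?_)⟩
        by_cases h : i = i0
        · simp [h, hi0]
        · simp only [if_neg h, Set.mem_preimage, Set.mem_compl_iff, Set.mem_singleton_iff]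
          intro hzi
          have : 1 < (Finset.univ.filter (fun i : Fin n => Z i ω = j)).card :=
            Finset.one_lt_card.mpr ⟨i, by simp [hzi], i0, by simp [hi0], h⟩
          omega
      · left
        refine Set.mem_iInter.mpr (fun i => ?_)
        simp only [Set.mem_preimage, Set.mem_compl_iff, Set.mem_singleton_iff]
        exact fun h => hex ⟨i, h⟩
    have hub : P ((A j)ᶜ) ≤ q ^ n + n * (p * q ^ (n-1)) := by
      calc P ((A j)ᶜ) ≤ P (E0 ∪ ⋃ i0, E i0) := measure_mono hsub
        _ ≤ P E0 + P (⋃ i0, E i0) := measure_union_le _ _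
        _ ≤ P E0 + ∑ i0, P (E i0) := add_le_add le_rfl (measure_iUnion_fintype_le _ _)
        _ = q ^ n + n * (p * q ^ (n-1)) := by
            simp [hPE0, hPE, Finset.sum_const, Finset.card_univ, nsmul_eq_mul]
    have hAc : (P (A j)).toReal = 1 - (P ((A j)ᶜ)).toReal := by
      have h1 : P (((A j)ᶜ)ᶜ) = 1 - P ((A j)ᶜ) := prob_compl_eq_one_sub (hAmeas j).compl
      rw [compl_compl] at h1
      rw [h1, ENNReal.toReal_sub_of_le prob_le_one ENNReal.one_ne_top, ENNReal.toReal_one]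
    rw [hAc]
    have hqr : q.toReal = 1 - (m:ℝ)⁻¹ := by
      rw [hq, ENNReal.toReal_sub_of_le hp1 ENNReal.one_ne_top, ENNReal.toReal_one, hp,
        ENNReal.toReal_inv, ENNReal.toReal_natCast]
    have hpr : p.toReal = (m:ℝ)⁻¹ := by rw [hp, ENNReal.toReal_inv, ENNReal.toReal_natCast]
    have hfin : q ^ n + (n : ENNReal) * (p * q ^ (n-1)) ≠ ⊤ :=
      ENNReal.add_ne_top.mpr ⟨ENNReal.pow_ne_top hqt,
        ENNReal.mul_ne_top (ENNReal.natCast_ne_top n)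
          (ENNReal.mul_ne_top hpt (ENNReal.pow_ne_top hqt))⟩
    have hb : (P ((A j)ᶜ)).toReal
        ≤ (1 - (m:ℝ)⁻¹) ^ n + n * (m:ℝ)⁻¹ * (1 - (m:ℝ)⁻¹) ^ (n-1) := by
      calc (P ((A j)ᶜ)).toReal ≤ (q ^ n + (n : ENNReal) * (p * q ^ (n-1))).toReal :=
            ENNReal.toReal_mono hfin hub
        _ = (1 - (m:ℝ)⁻¹) ^ n + n * (m:ℝ)⁻¹ * (1 - (m:ℝ)⁻¹) ^ (n-1) := by
            rw [ENNReal.toReal_add (ENNReal.pow_ne_top hqt)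
                (ENNReal.mul_ne_top (ENNReal.natCast_ne_top n)
                  (ENNReal.mul_ne_top hpt (ENNReal.pow_ne_top hqt))),
              ENNReal.toReal_pow, ENNReal.toReal_mul, ENNReal.toReal_mul,
              ENNReal.toReal_pow, hqr, hpr, ENNReal.toReal_natCast]
            ring
    have hkey := key_real_ineq n m hn hm
    linarith
  calc (m : ℝ) * (1 - (1 + ((n : ℝ) - 1) / m) * Real.exp (-((n : ℝ) - 1) / m))
      = ∑ _j : Fin m, (1 - (1 + ((n : ℝ) - 1) / m) * Real.exp (-((n : ℝ) - 1) / m)) := by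
        rw [Finset.sum_const, Finset.card_univ, Fintype.card_fin, nsmul_eq_mul]
    _ ≤ ∑ j : Fin m, (P (A j)).toReal := Finset.sum_le_sum (fun j _ => hjbound j)
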